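/- For p ∈ {0, 2} and α > 0, define F_p(α) = ∫_{ℝ³} |v|^p · (α·e^{−|v|²/2})/(1 + α·e^{−|v|²/2}) dv (Lebesgue integral over ℝ³). Then there exists a constant l > 0 such that the map Φ : (0,∞)² → ℝ², Φ(a,b) = (b^{3/2}·F₀(a), b·F₂(a)/(2·F₀(a))), is injective, and for every (a,b) ∈ (0,∞)² the second component satisfies b·F₂(a)/(2·F₀(a)) > l · (b^{3/2}·F₀(a))^{2/3}. -/

import Mathlib

open MeasureTheory

/-- The Fermi integral `F_p α = ∫_{ℝ³} |v|^p (α e^{-|v|²/2})/(1 + α e^{-|v|²/2}) dv`. -/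
noncomputable def fermiIntegral (p : ℝ) (α : ℝ) : ℝ :=
  ∫ v : EuclideanSpace ℝ (Fin 3),
    ‖v‖ ^ p * (α * Real.exp (-‖v‖ ^ 2 / 2)) / (1 + α * Real.exp (-‖v‖ ^ 2 / 2))

open Set Filter Metric Topology

noncomputable def ff (α r : ℝ) : ℝ := α / (α + Real.exp (r ^ 2 / 2))

noncomputable def II (k : ℕ) (α : ℝ) : ℝ := ∫ r in Set.Ioi (0:ℝ), r ^ k * ff α r
noncomputable def JJ (k : ℕ) (α : ℝ) : ℝ :=
  ∫ r in Set.Ioi (0:ℝ), r ^ k * (ff α r * (1 - ff α r))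

lemma denom_pos {α : ℝ} (hα : 0 < α) (r : ℝ) : 0 < α + Real.exp (r ^ 2 / 2) := by positivity

lemma hasDerivAt_ff {α : ℝ} (hα : 0 < α) (r : ℝ) :
    HasDerivAt (ff α) (-(r * (ff α r * (1 - ff α r)))) r := by
  have hE : HasDerivAt (fun s : ℝ => Real.exp (s ^ 2 / 2))
      (Real.exp (r ^ 2 / 2) * ((2 : ℕ) * r ^ 1 / 2)) r :=
    (((hasDerivAt_pow 2 r).div_const 2).exp)
  have h1 : HasDerivAt (fun s : ℝ => α + Real.exp (s ^ 2 / 2))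
      (Real.exp (r ^ 2 / 2) * ((2 : ℕ) * r ^ 1 / 2)) r := (hE.const_add α)
  have h2 := (h1.inv (denom_pos hα r).ne').const_mul α
  have hfun : (fun s : ℝ => α * (α + Real.exp (s ^ 2 / 2))⁻¹) = ff α := by
    ext s; simp [ff, div_eq_mul_inv]
  simp only [Pi.inv_apply] at h2
  rw [hfun] at h2
  refine h2.congr_deriv ?_
  have hd := (denom_pos hα r).ne'
  simp only [ff]
  push_cast
  field_simp
  ring

lemma ff_pos {α : ℝ} (hα : 0 < α) (r : ℝ) : 0 < ff α r := by unfold ff; positivity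

lemma ff_lt_one {α : ℝ} (hα : 0 < α) (r : ℝ) : ff α r < 1 := by
  rw [ff, div_lt_one (denom_pos hα r)]
  nlinarith [Real.exp_pos (r ^ 2 / 2)]

lemma ff_le {α : ℝ} (hα : 0 < α) (r : ℝ) : ff α r ≤ α * Real.exp (-(1/2) * r ^ 2) := by
  have hE := Real.exp_pos (r ^ 2 / 2)
  have h : α * Real.exp (-(1/2) * r ^ 2) = α / Real.exp (r ^ 2 / 2) := by
    rw [eq_div_iff hE.ne', mul_assoc, ← Real.exp_add]
    ring_nf
    simp
  rw [h, ff]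
  exact div_le_div_of_nonneg_left hα.le hE (by linarith)

lemma continuous_ff {α : ℝ} (hα : 0 < α) : Continuous (ff α) :=
  continuous_const.div (continuous_const.add (Real.continuous_exp.comp
    ((continuous_pow 2).div_const 2))) (fun r => (denom_pos hα r).ne')

/-- the dominating function -/
lemma integrable_dom (k : ℕ) :
    IntegrableOn (fun r : ℝ => r ^ k * Real.exp (-(1/2) * r ^ 2)) (Set.Ioi 0) := by
  have h := integrableOn_rpow_mul_exp_neg_mul_sq (b := 1/2) (by norm_num) (s := (k : ℝ))
    (by exact lt_of_lt_of_le (by norm_num) (Nat.cast_nonneg k))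
  refine h.congr_fun (fun r hr => ?_) measurableSet_Ioi
  beta_reduce
  rw [Real.rpow_natCast]

lemma integrableOn_II {α : ℝ} (hα : 0 < α) (k : ℕ) :
    IntegrableOn (fun r : ℝ => r ^ k * ff α r) (Set.Ioi 0) := by
  refine Integrable.mono' ((integrable_dom k).const_mul α) ?_ ?_
  · exact ((continuous_pow k).mul (continuous_ff hα)).aestronglyMeasurable
  · filter_upwards [ae_restrict_mem measurableSet_Ioi] with r hr
    have h0 : (0:ℝ) < r := hr
    have hffp := (ff_pos hα r).le
    rw [Real.norm_eq_abs, abs_of_nonneg (by positivity)]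
    calc r ^ k * ff α r ≤ r ^ k * (α * Real.exp (-(1/2) * r ^ 2)) :=
        mul_le_mul_of_nonneg_left (ff_le hα r) (by positivity)
      _ = α * (r ^ k * Real.exp (-(1/2) * r ^ 2)) := by ring

lemma integrableOn_JJ {α : ℝ} (hα : 0 < α) (k : ℕ) :
    IntegrableOn (fun r : ℝ => r ^ k * (ff α r * (1 - ff α r))) (Set.Ioi 0) := by
  refine Integrable.mono' (integrableOn_II hα k) ?_ ?_
  · exact ((continuous_pow k).mul ((continuous_ff hα).mul
      (continuous_const.sub (continuous_ff hα)))).aestronglyMeasurable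
  · filter_upwards [ae_restrict_mem measurableSet_Ioi] with r hr
    have h0 : (0:ℝ) < r := hr
    have h1 := ff_pos hα r
    have h2 := ff_lt_one hα r
    rw [Real.norm_eq_abs, abs_of_nonneg (by nlinarith [pow_pos h0 k, mul_pos h1 (by linarith : (0:ℝ) < 1 - ff α r)])]
    nlinarith [pow_pos h0 k, mul_pos h1 (by linarith : (0:ℝ) < 1 - ff α r), mul_le_of_le_one_right h1.le (by linarith : 1 - ff α r ≤ 1)]

lemma tendsto_rk_ff {α : ℝ} (hα : 0 < α) (m : ℕ) :
    Tendsto (fun r : ℝ => r ^ m * ff α r) atTop (𝓝 0) := by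
  have T1 : Tendsto (fun u : ℝ => u ^ m * Real.exp (-u)) atTop (𝓝 0) :=
    Real.tendsto_pow_mul_exp_neg_atTop_nhds_zero m
  have T2 : Tendsto (fun r : ℝ => r ^ 2 / 2) atTop atTop :=
    (tendsto_pow_atTop (two_ne_zero)).atTop_div_const (by norm_num)
  have T3 : Tendsto (fun r : ℝ => α * 2 ^ m * ((r ^ 2 / 2) ^ m * Real.exp (-(r ^ 2 / 2))))
      atTop (𝓝 0) := by
    simpa using (T1.comp T2).const_mul (α * 2 ^ m)
  refine tendsto_of_tendsto_of_tendsto_of_le_of_le' tendsto_const_nhds T3 ?_ ?_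
  · filter_upwards [eventually_ge_atTop (0:ℝ)] with r hr
    have := (ff_pos hα r).le
    positivity
  · filter_upwards [eventually_ge_atTop (1:ℝ)] with r hr
    have h0 : (0:ℝ) ≤ r := by linarith
    have h1 : r ^ m * ff α r ≤ r ^ m * (α * Real.exp (-(1/2) * r ^ 2)) :=
      mul_le_mul_of_nonneg_left (ff_le hα r) (by positivity)
    have h2 : r ^ m ≤ (r ^ 2) ^ m := pow_le_pow_left₀ h0 (by nlinarith) m
    have h3 : r ^ m * (α * Real.exp (-(1/2) * r ^ 2))
        ≤ (r ^ 2) ^ m * (α * Real.exp (-(1/2) * r ^ 2)) :=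
      mul_le_mul_of_nonneg_right h2 (by positivity)
    calc r ^ m * ff α r ≤ (r ^ 2) ^ m * (α * Real.exp (-(1/2) * r ^ 2)) := le_trans h1 h3
      _ = α * 2 ^ m * ((r ^ 2 / 2) ^ m * Real.exp (-(r ^ 2 / 2))) := by
          rw [div_pow]
          have : -(1/2) * r ^ 2 = -(r ^ 2 / 2) := by ring
          rw [this]
          field_simp

lemma parts {α : ℝ} (hα : 0 < α) (k : ℕ) : (k + 1 : ℝ) * II k α = JJ (k+2) α := by
  have hderiv : ∀ r : ℝ, r ∈ Set.Ioi (0:ℝ) → HasDerivAt (fun r : ℝ => r ^ (k+1) * ff α r)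
      ((k + 1 : ℝ) * (r ^ k * ff α r) - r ^ (k+2) * (ff α r * (1 - ff α r))) r := by
    intro r _
    have h := (hasDerivAt_pow (k+1) r).mul (hasDerivAt_ff hα r)
    refine h.congr_deriv ?_
    simp only [Nat.add_sub_cancel]
    push_cast
    ring
  have hcont : ContinuousWithinAt (fun r : ℝ => r ^ (k+1) * ff α r) (Set.Ici 0) 0 :=
    ((continuous_pow (k+1)).mul (continuous_ff hα)).continuousWithinAt
  have hint1 : IntegrableOn (fun r : ℝ => (k + 1 : ℝ) * (r ^ k * ff α r)) (Set.Ioi 0) :=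
    (integrableOn_II hα k).const_mul _
  have hint2 := integrableOn_JJ hα (k+2)
  have f'int : IntegrableOn (fun r : ℝ => (k + 1 : ℝ) * (r ^ k * ff α r)
      - r ^ (k+2) * (ff α r * (1 - ff α r))) (Set.Ioi 0) := hint1.sub hint2
  have key := integral_Ioi_of_hasDerivAt_of_tendsto hcont hderiv f'int (tendsto_rk_ff hα (k+1))
  rw [zero_pow (Nat.succ_ne_zero k), zero_mul, sub_zero] at key
  rw [integral_sub hint1 hint2, integral_const_mul] at key
  have : (k + 1 : ℝ) * II k α - JJ (k+2) α = 0 := key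
  linarith

lemma setIntegral_Ioi_pos {g : ℝ → ℝ} (hint : IntegrableOn g (Set.Ioi 0))
    (hnn : ∀ r ∈ Set.Ioi (0:ℝ), 0 ≤ g r) {a : ℝ} (ha : 0 < a)
    (hpos : ∀ r ∈ Set.Ioo a (a+1), 0 < g r) : 0 < ∫ r in Set.Ioi (0:ℝ), g r := by
  have hsub : Set.Ioc a (a+1) ⊆ Set.Ioi 0 := fun x hx => lt_trans ha hx.1
  have h1 : ∫ r in Set.Ioc a (a+1), g r ≤ ∫ r in Set.Ioi (0:ℝ), g r := by
    refine setIntegral_mono_set hint ?_ (HasSubset.Subset.eventuallyLE hsub)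
    filter_upwards [ae_restrict_mem measurableSet_Ioi] with r hr using hnn r hr
  have h2 : 0 < ∫ r in a..(a+1), g r :=
    intervalIntegral.intervalIntegral_pos_of_pos_on
      ((intervalIntegrable_iff_integrableOn_Ioc_of_le (by linarith)).2 (hint.mono_set hsub))
      hpos (lt_add_one a)
  rw [intervalIntegral.integral_of_le (by linarith : a ≤ a + 1)] at h2
  linarith

lemma II_pos {α : ℝ} (hα : 0 < α) (k : ℕ) : 0 < II k α := by
  refine setIntegral_Ioi_pos (integrableOn_II hα k) (fun r hr => ?_) one_pos (fun r hr => ?_)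
  · have := (ff_pos hα r).le
    have : (0:ℝ) < r := hr
    positivity
  · have h1 := ff_pos hα r
    have h0 : (0:ℝ) < r := by have := hr.1; linarith
    positivity

lemma JJ_pos {α : ℝ} (hα : 0 < α) (k : ℕ) : 0 < JJ k α := by
  refine setIntegral_Ioi_pos (integrableOn_JJ hα k) (fun r hr => ?_) one_pos (fun r hr => ?_)
  · have h1 := (ff_pos hα r).le
    have h2 := (ff_lt_one hα r).le
    have h0 : (0:ℝ) < r := hr
    have : 0 ≤ 1 - ff α r := by linarith
    positivity
  · have h1 := ff_pos hα r
    have h2 := ff_lt_one hα r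
    have h0 : (0:ℝ) < r := by have := hr.1; linarith
    have : 0 < 1 - ff α r := by linarith
    positivity

lemma qpos {α : ℝ} (hα : 0 < α) (t : ℝ) :
    0 < JJ 2 α * t ^ 2 + 2 * JJ 4 α * t + JJ 6 α := by
  have hw2 := integrableOn_JJ hα 2
  have hw4 := integrableOn_JJ hα 4
  have hw6 := integrableOn_JJ hα 6
  set G : ℝ → ℝ := fun r => t ^ 2 * (r ^ 2 * (ff α r * (1 - ff α r)))
    + 2 * t * (r ^ 4 * (ff α r * (1 - ff α r))) + r ^ 6 * (ff α r * (1 - ff α r)) with hG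
  have hfact : ∀ r : ℝ, G r = r ^ 2 * (ff α r * (1 - ff α r)) * (t + r ^ 2) ^ 2 := by
    intro r; simp only [hG]; ring
  have hIpos : 0 < ∫ r in Set.Ioi (0:ℝ), G r := by
    refine setIntegral_Ioi_pos (((hw2.const_mul _).add (hw4.const_mul _)).add hw6)
      (fun r hr => ?_) (by positivity : (0:ℝ) < 1 + |t|) (fun r hr => ?_)
    · rw [hfact r]
      have h1 := (ff_pos hα r).le
      have h2 := (ff_lt_one hα r).le
      have : 0 ≤ 1 - ff α r := by linarith
      positivity
    · rw [hfact r]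
      have h1 := ff_pos hα r
      have h2 := ff_lt_one hα r
      have h3 : 0 < 1 - ff α r := by linarith
      have h0 : 1 + |t| < r := hr.1
      have habs : 0 ≤ |t| := abs_nonneg t
      have hrpos : (0:ℝ) < r := by linarith
      have ht : 0 < t + r ^ 2 := by nlinarith [neg_abs_le t]
      positivity
  have hw24 : IntegrableOn (fun r : ℝ => t ^ 2 * (r ^ 2 * (ff α r * (1 - ff α r)))
      + 2 * t * (r ^ 4 * (ff α r * (1 - ff α r)))) (Set.Ioi 0) :=
    (hw2.const_mul _).add (hw4.const_mul _)
  have hsplit : ∫ r in Set.Ioi (0:ℝ), G r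
      = t ^ 2 * JJ 2 α + 2 * t * JJ 4 α + JJ 6 α := by
    rw [hG]
    rw [integral_add hw24 hw6, integral_add (hw2.const_mul _) (hw4.const_mul _),
      integral_const_mul, integral_const_mul]
    rfl
  rw [hsplit] at hIpos
  nlinarith [hIpos]

lemma cs {α : ℝ} (hα : 0 < α) : JJ 4 α ^ 2 < JJ 2 α * JJ 6 α := by
  have h2 := JJ_pos hα 2
  have h := qpos hα (-(JJ 4 α / JJ 2 α))
  have key : JJ 2 α * (-(JJ 4 α / JJ 2 α)) ^ 2 + 2 * JJ 4 α * (-(JJ 4 α / JJ 2 α)) + JJ 6 α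
      = (JJ 2 α * JJ 6 α - JJ 4 α ^ 2) / JJ 2 α := by
    field_simp
    ring
  rw [key] at h
  have := (div_pos_iff.mp h)
  rcases this with ⟨h1, _⟩ | ⟨_, h2'⟩
  · linarith
  · linarith

lemma hasDerivAt_II {α : ℝ} (hα : 0 < α) (k : ℕ) :
    HasDerivAt (II k) (JJ k α / α) α := by
  have key := hasDerivAt_integral_of_dominated_loc_of_deriv_le
    (μ := volume.restrict (Set.Ioi (0:ℝ))) (x₀ := α)
    (F := fun x r => r ^ k * ff x r)
    (F' := fun x r => r ^ k * (Real.exp (r ^ 2 / 2) / (x + Real.exp (r ^ 2 / 2)) ^ 2))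
    (bound := fun r => r ^ k * Real.exp (-(1/2) * r ^ 2))
    (Metric.ball_mem_nhds α (half_pos hα)) ?_ (integrableOn_II hα k) ?_ ?_ (integrable_dom k) ?_
  · have heq : (∫ r in Set.Ioi (0:ℝ),
        r ^ k * (Real.exp (r ^ 2 / 2) / (α + Real.exp (r ^ 2 / 2)) ^ 2)) = JJ k α / α := by
      rw [JJ, ← integral_div]
      refine setIntegral_congr_fun measurableSet_Ioi (fun r _ => ?_)
      have hd := (denom_pos hα r).ne'
      rw [ff]
      field_simp
      ring
    rw [← heq]
    exact key.2
  · filter_upwards [eventually_gt_nhds hα] with x hx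
    exact ((continuous_pow k).mul (continuous_ff hx)).aestronglyMeasurable
  · refine Continuous.aestronglyMeasurable ?_
    exact (continuous_pow k).mul ((Real.continuous_exp.comp ((continuous_pow 2).div_const 2)).div
      (((continuous_const.add (Real.continuous_exp.comp ((continuous_pow 2).div_const 2))).pow 2))
      (fun r => pow_ne_zero 2 (denom_pos hα r).ne'))
  · filter_upwards [ae_restrict_mem measurableSet_Ioi] with r hr
    intro x hx
    have hr0 : (0:ℝ) < r := hr
    have hx0 : 0 < x := by
      rw [mem_ball, Real.dist_eq, abs_sub_lt_iff] at hx
      linarith [hx.2]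
    have hE := Real.exp_pos (r ^ 2 / 2)
    have hb : Real.exp (r ^ 2 / 2) / (x + Real.exp (r ^ 2 / 2)) ^ 2
        ≤ Real.exp (-(1/2) * r ^ 2) := by
      have h1 : Real.exp (r ^ 2 / 2) ^ 2 ≤ (x + Real.exp (r ^ 2 / 2)) ^ 2 := by nlinarith
      have h2 : Real.exp (-(1/2) * r ^ 2) = Real.exp (r ^ 2 / 2) / Real.exp (r ^ 2 / 2) ^ 2 := by
        rw [eq_div_iff (by positivity), pow_two (Real.exp (r ^ 2 / 2)), ← Real.exp_add, ← Real.exp_add]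
        congr 1
        ring
      rw [h2]
      exact div_le_div_of_nonneg_left hE.le (by positivity) h1
    rw [Real.norm_eq_abs, abs_of_nonneg (by positivity)]
    exact mul_le_mul_of_nonneg_left hb (by positivity)
  · filter_upwards [ae_restrict_mem measurableSet_Ioi] with r hr
    intro x hx
    have hx0 : 0 < x := by
      rw [mem_ball, Real.dist_eq, abs_sub_lt_iff] at hx
      linarith [hx.2]
    have hE := Real.exp_pos (r ^ 2 / 2)
    have hd : x + Real.exp (r ^ 2 / 2) ≠ 0 := by positivity
    have h := ((hasDerivAt_id x).div ((hasDerivAt_id x).add_const (Real.exp (r ^ 2 / 2))) hd)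
    have h2 := h.const_mul (r ^ k)
    have hfun : (fun y : ℝ => r ^ k * (y / (y + Real.exp (r ^ 2 / 2))))
        = fun y => r ^ k * ff y r := by
      funext y; rw [ff]
    simp only [id_eq, Pi.div_apply] at h2
    rw [hfun] at h2
    refine h2.congr_deriv ?_
    field_simp; ring

lemma deriv_psi_neg {α : ℝ} (hα : 0 < α) :
    ∃ D, HasDerivAt (fun x => II 4 x ^ 3 / II 2 x ^ 5) D α ∧ D < 0 := by
  have h2pos := II_pos hα 2
  have h4pos := II_pos hα 4
  have hJ2 := JJ_pos hα 2
  have hder := ((hasDerivAt_II hα 4).pow 3).div ((hasDerivAt_II hα 2).pow 5)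
    (pow_ne_zero 5 h2pos.ne')
  refine ⟨_, hder, ?_⟩
  apply div_neg_of_neg_of_pos
  · have h1 : 3 * II 2 α = JJ 4 α := by
      have := parts hα 2
      push_cast at this
      linarith
    have h2 : 5 * II 4 α = JJ 6 α := by
      have := parts hα 4
      push_cast at this
      linarith
    have hcs := cs hα
    rw [← h1, ← h2] at hcs
    rw [← h1]
    push_cast
    norm_num
    have hkey : 3 * II 4 α ^ 2 * (3 * II 2 α / α) * II 2 α ^ 5
        - II 4 α ^ 3 * (5 * II 2 α ^ 4 * (JJ 2 α / α))
        = (9 * II 2 α ^ 2 - 5 * JJ 2 α * II 4 α) * (II 2 α ^ 4 * II 4 α ^ 2 / α) := by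
      field_simp
      ring
    have hX : (9 * II 2 α ^ 2 - 5 * JJ 2 α * II 4 α) * (II 2 α ^ 4 * II 4 α ^ 2 / α) < 0 :=
      mul_neg_of_neg_of_pos (by nlinarith [hcs]) (by positivity)
    linarith
  · exact pow_pos (pow_pos h2pos 5) 2

lemma psi_anti : StrictAntiOn (fun x => II 4 x ^ 3 / II 2 x ^ 5) (Set.Ioi 0) := by
  apply strictAntiOn_of_deriv_neg (convex_Ioi 0)
  · intro x hx
    obtain ⟨D, hD, _⟩ := deriv_psi_neg hx
    exact hD.continuousAt.continuousWithinAt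
  · intro x hx
    rw [interior_Ioi] at hx
    obtain ⟨D, hD, hneg⟩ := deriv_psi_neg hx
    rw [hD.deriv]
    exact hneg

noncomputable def cB : ℝ := 3 * (volume (Metric.ball (0 : EuclideanSpace ℝ (Fin 3)) 1)).toReal

lemma cB_pos : 0 < cB := by
  have h1 : 0 < volume (Metric.ball (0 : EuclideanSpace ℝ (Fin 3)) 1) :=
    measure_ball_pos _ _ one_pos
  have h2 : volume (Metric.ball (0 : EuclideanSpace ℝ (Fin 3)) 1) < ⊤ := measure_ball_lt_top
  have := ENNReal.toReal_pos h1.ne' h2.ne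
  unfold cB
  linarith

lemma polar (g : ℝ → ℝ) :
    (∫ v : EuclideanSpace ℝ (Fin 3), g ‖v‖) = cB * ∫ r in Set.Ioi (0:ℝ), r ^ 2 * g r := by
  have h := integral_fun_norm_addHaar (volume : Measure (EuclideanSpace ℝ (Fin 3))) g
  rw [h]
  simp only [finrank_euclideanSpace_fin, nsmul_eq_mul, smul_eq_mul, measureReal_def]
  rw [cB]
  norm_num
  ring

lemma ff_eq {α : ℝ} (hα : 0 < α) (r : ℝ) :
    α * Real.exp (-r ^ 2 / 2) / (1 + α * Real.exp (-r ^ 2 / 2)) = ff α r := by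
  have hE : Real.exp (-r ^ 2 / 2) = (Real.exp (r ^ 2 / 2))⁻¹ := by
    rw [← Real.exp_neg]
    ring_nf
  have hEp := Real.exp_pos (r ^ 2 / 2)
  have hd : 1 + α * (Real.exp (r ^ 2 / 2))⁻¹ ≠ 0 := by positivity
  rw [ff, hE]
  rw [div_eq_div_iff (by positivity) (denom_pos hα r).ne']
  field_simp
  exact add_comm _ _

lemma fermi0 {α : ℝ} (hα : 0 < α) : fermiIntegral 0 α = cB * II 2 α := by
  rw [fermiIntegral]
  have heq : (∫ v : EuclideanSpace ℝ (Fin 3),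
      ‖v‖ ^ (0:ℝ) * (α * Real.exp (-‖v‖ ^ 2 / 2)) / (1 + α * Real.exp (-‖v‖ ^ 2 / 2)))
      = ∫ v : EuclideanSpace ℝ (Fin 3), ff α ‖v‖ := by
    refine integral_congr_ae (Filter.Eventually.of_forall fun v => ?_)
    simp only [Real.rpow_zero, one_mul, ff_eq hα]
  rw [heq, polar (ff α), II]

lemma fermi2 {α : ℝ} (hα : 0 < α) : fermiIntegral 2 α = cB * II 4 α := by
  rw [fermiIntegral]
  have heq : (∫ v : EuclideanSpace ℝ (Fin 3),
      ‖v‖ ^ (2:ℝ) * (α * Real.exp (-‖v‖ ^ 2 / 2)) / (1 + α * Real.exp (-‖v‖ ^ 2 / 2)))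
      = ∫ v : EuclideanSpace ℝ (Fin 3), (fun r : ℝ => r ^ 2 * ff α r) ‖v‖ := by
    refine integral_congr_ae (Filter.Eventually.of_forall fun v => ?_)
    simp only [Real.rpow_two, mul_div_assoc, ff_eq hα]
  rw [heq, polar (fun r : ℝ => r ^ 2 * ff α r), II]
  congr 1
  refine setIntegral_congr_fun measurableSet_Ioi (fun r _ => ?_)
  ring

lemma bathtub {α : ℝ} (hα : 0 < α) :
    ∃ R : ℝ, 0 < R ∧ R ^ 3 = 3 * II 2 α ∧ R ^ 5 / 5 ≤ II 4 α := by
  have hI2 := II_pos hα 2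
  set R : ℝ := (3 * II 2 α) ^ ((1:ℝ)/3) with hRdef
  have hRpos : 0 < R := Real.rpow_pos_of_pos (by linarith) _
  have hR3 : R ^ 3 = 3 * II 2 α := by
    rw [hRdef, ← Real.rpow_natCast ((3 * II 2 α) ^ ((1:ℝ)/3)) 3,
      ← Real.rpow_mul (by linarith : (0:ℝ) ≤ 3 * II 2 α)]
    norm_num
  refine ⟨R, hRpos, hR3, ?_⟩
  have hII2 : II 2 α = R ^ 3 / 3 := by linarith
  have hint1 : IntegrableOn (fun r : ℝ => r ^ 4 * ff α r - R ^ 2 * (r ^ 2 * ff α r))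
      (Set.Ioi 0) := (integrableOn_II hα 4).sub ((integrableOn_II hα 2).const_mul _)
  have hcont : IntegrableOn (fun s : ℝ => s ^ 4 - R ^ 2 * s ^ 2) (Set.Ioc 0 R) :=
    ((continuous_pow 4).sub (continuous_const.mul (continuous_pow 2))).integrableOn_Ioc
  have hind : IntegrableOn ((Set.Ioc (0:ℝ) R).indicator (fun s => s ^ 4 - R ^ 2 * s ^ 2))
      (Set.Ioi 0) :=
    (hcont.integrable_indicator measurableSet_Ioc).restrict
  have hnn : 0 ≤ ∫ r in Set.Ioi (0:ℝ), ((r ^ 4 * ff α r - R ^ 2 * (r ^ 2 * ff α r))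
      - (Set.Ioc (0:ℝ) R).indicator (fun s => s ^ 4 - R ^ 2 * s ^ 2) r) := by
    refine setIntegral_nonneg measurableSet_Ioi (fun r hr => ?_)
    have hr0 : (0:ℝ) < r := hr
    have h1 := (ff_lt_one hα r).le
    have h2 := (ff_pos hα r).le
    by_cases hcase : r ≤ R
    · have hmem : r ∈ Set.Ioc (0:ℝ) R := ⟨hr0, hcase⟩
      rw [Set.indicator_of_mem hmem]
      have hr2 : r ^ 2 ≤ R ^ 2 := pow_le_pow_left₀ hr0.le hcase 2
      nlinarith [mul_nonneg (mul_nonneg (sq_nonneg r) (by linarith : (0:ℝ) ≤ R ^ 2 - r ^ 2))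
        (by linarith : (0:ℝ) ≤ 1 - ff α r)]
    · have hmem : r ∉ Set.Ioc (0:ℝ) R := fun hm => hcase hm.2
      rw [Set.indicator_of_notMem hmem, sub_zero]
      have hr2 : R ^ 2 ≤ r ^ 2 := pow_le_pow_left₀ hRpos.le (by linarith) 2
      nlinarith [mul_nonneg (mul_nonneg (sq_nonneg r) (by linarith : (0:ℝ) ≤ r ^ 2 - R ^ 2)) h2]
  have hindval : ∫ r in Set.Ioi (0:ℝ),
      (Set.Ioc (0:ℝ) R).indicator (fun s => s ^ 4 - R ^ 2 * s ^ 2) r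
      = R ^ 5 / 5 - R ^ 2 * (R ^ 3 / 3) := by
    rw [setIntegral_indicator measurableSet_Ioc,
      Set.inter_eq_right.mpr Set.Ioc_subset_Ioi_self,
      ← intervalIntegral.integral_of_le hRpos.le]
    rw [intervalIntegral.integral_sub (intervalIntegral.intervalIntegrable_pow 4)
      ((intervalIntegral.intervalIntegrable_pow 2).const_mul _), intervalIntegral.integral_const_mul,
      integral_pow, integral_pow]
    norm_num
  have hsplit : ∫ r in Set.Ioi (0:ℝ), ((r ^ 4 * ff α r - R ^ 2 * (r ^ 2 * ff α r))
      - (Set.Ioc (0:ℝ) R).indicator (fun s => s ^ 4 - R ^ 2 * s ^ 2) r)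
      = (II 4 α - R ^ 2 * II 2 α) - (R ^ 5 / 5 - R ^ 2 * (R ^ 3 / 3)) := by
    rw [integral_sub hint1 hind, integral_sub (integrableOn_II hα 4)
      ((integrableOn_II hα 2).const_mul _), integral_const_mul, hindval]
    rfl
  rw [hsplit] at hnn
  rw [hII2] at hnn
  linarith

lemma rpow_32_sq {x : ℝ} (hx : 0 < x) : (x ^ ((3:ℝ)/2)) ^ 2 = x ^ 3 := by
  rw [← Real.rpow_natCast (x ^ ((3:ℝ)/2)) 2, ← Real.rpow_mul hx.le,
    ← Real.rpow_natCast x 3]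
  norm_num

lemma rpow_32_23 {x : ℝ} (hx : 0 < x) : (x ^ ((3:ℝ)/2)) ^ ((2:ℝ)/3) = x := by
  rw [← Real.rpow_mul hx.le]
  norm_num

theorem fermi_mass_energy_injective' :
    ∃ l : ℝ, 0 < l ∧
      Set.InjOn
        (fun ab : ℝ × ℝ =>
          (ab.2 ^ ((3 : ℝ) / 2) * fermiIntegral 0 ab.1,
           ab.2 * fermiIntegral 2 ab.1 / (2 * fermiIntegral 0 ab.1)))
        (Set.Ioi (0 : ℝ) ×ˢ Set.Ioi (0 : ℝ)) ∧
      ∀ a b : ℝ, 0 < a → 0 < b →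
        l * (b ^ ((3 : ℝ) / 2) * fermiIntegral 0 a) ^ ((2 : ℝ) / 3) <
          b * fermiIntegral 2 a / (2 * fermiIntegral 0 a) := by
  have hc := cB_pos
  set K : ℝ := (cB / 3) ^ ((2:ℝ)/3) with hKdef
  have hK : 0 < K := Real.rpow_pos_of_pos (by linarith) _
  refine ⟨3 / (20 * K), by positivity, ?_, ?_⟩
  · rintro ⟨a, b⟩ hab ⟨a', b'⟩ hab' hEq
    simp only [Set.mem_prod, Set.mem_Ioi] at hab hab'
    obtain ⟨ha, hb⟩ := hab
    obtain ⟨ha', hb'⟩ := hab'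
    have h1 := congrArg Prod.fst hEq
    have h2 := congrArg Prod.snd hEq
    simp only at h1 h2
    rw [fermi0 ha, fermi0 ha'] at h1
    rw [fermi0 ha, fermi0 ha', fermi2 ha, fermi2 ha'] at h2
    have hI2 := II_pos ha 2
    have hI4 := II_pos ha 4
    have hI2' := II_pos ha' 2
    have hI4' := II_pos ha' 4
    -- cancel cB in h1
    have hA : b ^ ((3:ℝ)/2) * II 2 a = b' ^ ((3:ℝ)/2) * II 2 a' := by
      apply mul_left_cancel₀ hc.ne'
      linear_combination h1
    -- cross-multiplied h2 without cB
    have h2' : b * (cB * II 4 a) * (2 * (cB * II 2 a')) =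
        b' * (cB * II 4 a') * (2 * (cB * II 2 a)) := by
      have hd : (2 * (cB * II 2 a)) ≠ 0 := by positivity
      have hd' : (2 * (cB * II 2 a')) ≠ 0 := by positivity
      exact (div_eq_div_iff hd hd').mp h2
    have hB : b * II 4 a * (2 * II 2 a') = b' * II 4 a' * (2 * II 2 a) := by
      apply mul_left_cancel₀ (pow_ne_zero 2 hc.ne')
      linear_combination h2'
    -- squares and cubes
    have hA2 : b ^ 3 * II 2 a ^ 2 = b' ^ 3 * II 2 a' ^ 2 := by
      have h := congrArg (fun z : ℝ => z ^ 2) hA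
      rw [mul_pow, mul_pow, rpow_32_sq hb, rpow_32_sq hb'] at h
      exact h
    have hB3 : b ^ 3 * II 4 a ^ 3 * II 2 a' ^ 3 = b' ^ 3 * II 4 a' ^ 3 * II 2 a ^ 3 := by
      have h := congrArg (fun z : ℝ => z ^ 3) hB
      linear_combination (1/8 : ℝ) * h
    have hgoal : b ^ 3 * (II 4 a ^ 3 * II 2 a' ^ 5) = b ^ 3 * (II 4 a' ^ 3 * II 2 a ^ 5) := by
      linear_combination (II 2 a' ^ 2) * hB3 - (II 4 a' ^ 3 * II 2 a ^ 3) * hA2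
    have hcross : II 4 a ^ 3 * II 2 a' ^ 5 = II 4 a' ^ 3 * II 2 a ^ 5 :=
      mul_left_cancel₀ (pow_ne_zero 3 hb.ne') hgoal
    have hpsi : II 4 a ^ 3 / II 2 a ^ 5 = II 4 a' ^ 3 / II 2 a' ^ 5 :=
      (div_eq_div_iff (pow_ne_zero 5 hI2.ne') (pow_ne_zero 5 hI2'.ne')).mpr hcross
    have haa : a = a' := psi_anti.injOn (Set.mem_Ioi.mpr ha) (Set.mem_Ioi.mpr ha') hpsi
    subst haa
    have hpp : b ^ ((3:ℝ)/2) = b' ^ ((3:ℝ)/2) := mul_right_cancel₀ hI2.ne' hA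
    have hbb : b = b' := by
      rw [← rpow_32_23 hb, ← rpow_32_23 hb', hpp]
    rw [hbb]
  · intro a b ha hb
    obtain ⟨R, hR, hR3, hR5⟩ := bathtub ha
    have hI2 := II_pos ha 2
    have hI4 := II_pos ha 4
    have hII2 : II 2 a = R ^ 3 / 3 := by linarith
    rw [fermi0 ha, fermi2 ha]
    have hrhs : b * (cB * II 4 a) / (2 * (cB * II 2 a)) = b * II 4 a / (2 * II 2 a) := by
      rw [div_eq_div_iff (by positivity) (by positivity)]
      ring
    rw [hrhs]
    have hlhs : (b ^ ((3:ℝ)/2) * (cB * II 2 a)) ^ ((2:ℝ)/3) = b * (K * R ^ 2) := by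
      have e2 : cB * II 2 a = cB / 3 * R ^ 3 := by rw [hII2]; ring
      rw [e2, Real.mul_rpow (Real.rpow_nonneg hb.le _) (by positivity),
        rpow_32_23 hb, Real.mul_rpow (by positivity) (by positivity), ← hKdef,
        ← Real.rpow_natCast R 3, ← Real.rpow_mul hR.le]
      norm_num
    rw [hlhs]
    have hstep1 : 3 / (20 * K) * (b * (K * R ^ 2)) = 3 / 20 * (b * R ^ 2) := by
      field_simp
    have hstep2 : 3 / 20 * (b * R ^ 2) < 3 / 10 * (b * R ^ 2) := by
      nlinarith [mul_pos hb (pow_pos hR 2)]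
    have hstep3 : 3 / 10 * (b * R ^ 2) ≤ b * II 4 a / (2 * II 2 a) := by
      rw [hII2, le_div_iff₀ (by positivity)]
      nlinarith [mul_le_mul_of_nonneg_left hR5 hb.le, pow_pos hR 3]
    linarith [hstep1, hstep2, hstep3]

/-- There is `l > 0` such that the map `(a,b) ↦ (ρ, e) = (b^{3/2} F₀(a), b F₂(a)/(2 F₀(a)))`
is injective on `(0,∞)²`, and its image lies in the region `{(ρ,e) : e > l ρ^{2/3}}`. -/
theorem fermi_mass_energy_injective :
    ∃ l : ℝ, 0 < l ∧
      Set.InjOn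
        (fun ab : ℝ × ℝ =>
          (ab.2 ^ ((3 : ℝ) / 2) * fermiIntegral 0 ab.1,
           ab.2 * fermiIntegral 2 ab.1 / (2 * fermiIntegral 0 ab.1)))
        (Set.Ioi (0 : ℝ) ×ˢ Set.Ioi (0 : ℝ)) ∧
      ∀ a b : ℝ, 0 < a → 0 < b →
        l * (b ^ ((3 : ℝ) / 2) * fermiIntegral 0 a) ^ ((2 : ℝ) / 3) <
          b * fermiIntegral 2 a / (2 * fermiIntegral 0 a) := by
  exact fermi_mass_energy_injective'
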